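/- Define Λ(y) = e^{−(μ/σ²)y} ξ(y) / sinh(Ξ(k−y)) for y ∈ [0,k). Then Λ is differentiable on [0,k) with Λ'(y) = Ξ e^{−(μ/σ²)k} / sinh²(Ξ(k−y)) > 0 for all y ∈ [0,k); equivalently, Λ(y₂) − Λ(y₁) = e^{−(μ/σ²)k} sinh(Ξ(y₂−y₁)) / ( sinh(Ξ(k−y₁)) sinh(Ξ(k−y₂)) ) for all y₁, y₂ ∈ [0,k). -/

import Mathlib

open Real Set

noncomputable section

/-- `Ξ = sqrt(2r/σ² + μ²/σ⁴)`. -/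
def Xi (r μ σ : ℝ) : ℝ := Real.sqrt (2 * r / σ ^ 2 + μ ^ 2 / σ ^ 4)

/-- The closed-form expression for the Laplace transform
`ξ(y) = E[e^{-r τ_D(k)} | D_0 = y]` of the drawdown time of a Brownian motion
with drift `μ` and volatility `σ`. -/
def xiFormula (r μ σ k y : ℝ) : ℝ :=
  exp (μ / σ ^ 2 * (y - k)) * (sinh (Xi r μ σ * y) / sinh (Xi r μ σ * k)) +
    exp (μ / σ ^ 2 * y) * (sinh (Xi r μ σ * (k - y)) / sinh (Xi r μ σ * k)) *
      (exp (-(μ / σ ^ 2) * k) * Xi r μ σ /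
        (Xi r μ σ * cosh (Xi r μ σ * k) - μ / σ ^ 2 * sinh (Xi r μ σ * k)))

/-- `Λ(y) = e^{-(μ/σ²)y} ξ(y) / sinh(Ξ(k-y))`. -/
def LambdaFn (r μ σ k y : ℝ) : ℝ :=
  exp (-(μ / σ ^ 2) * y) * xiFormula r μ σ k y / sinh (Xi r μ σ * (k - y))

theorem Lambda_deriv (σ μ r k : ℝ) (hσ : 0 < σ) (hr : 0 < r) (hk : 0 < k) :
    (∀ y ∈ Set.Ico (0 : ℝ) k,
      HasDerivAt (fun u => LambdaFn r μ σ k u)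
        (Xi r μ σ * exp (-(μ / σ ^ 2) * k) / sinh (Xi r μ σ * (k - y)) ^ 2) y ∧
        0 < Xi r μ σ * exp (-(μ / σ ^ 2) * k) / sinh (Xi r μ σ * (k - y)) ^ 2) ∧
      ∀ y₁ ∈ Set.Ico (0 : ℝ) k, ∀ y₂ ∈ Set.Ico (0 : ℝ) k,
        LambdaFn r μ σ k y₂ - LambdaFn r μ σ k y₁ =
          exp (-(μ / σ ^ 2) * k) * sinh (Xi r μ σ * (y₂ - y₁)) /
            (sinh (Xi r μ σ * (k - y₁)) * sinh (Xi r μ σ * (k - y₂))) := by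
  set m := μ / σ ^ 2 with hm
  set X := Xi r μ σ with hXdef
  have hXpos : 0 < X := by
    rw [hXdef, Xi]
    have : 0 < 2 * r / σ ^ 2 + μ ^ 2 / σ ^ 4 := by positivity
    exact Real.sqrt_pos.2 this
  have hSk : 0 < sinh (X * k) := Real.sinh_pos_iff.2 (by positivity)
  set C : ℝ := exp (-m * k) * X /
      (X * cosh (X * k) - m * sinh (X * k)) with hC
  clear_value C
  set B : ℝ := C / sinh (X * k) with hB
  clear_value B
  have key : ∀ y ∈ Set.Iio k, LambdaFn r μ σ k y =
      exp (-m * k) / sinh (X * k) * (sinh (X * y) / sinh (X * (k - y))) + B := by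
    intro y hy
    have hyk : y < k := hy
    have hS : 0 < sinh (X * (k - y)) :=
      Real.sinh_pos_iff.2 (mul_pos hXpos (by linarith))
    have h1 : exp (m * (y - k)) = exp (-m * k) * exp (m * y) := by
      rw [← Real.exp_add]; ring_nf
    unfold LambdaFn xiFormula
    rw [← hXdef, ← hm, ← hC, hB, h1,
      show -m * y = -(m * y) by ring, Real.exp_neg]
    field_simp
  constructor
  · intro y hy
    have hyk : y < k := hy.2
    have hS : 0 < sinh (X * (k - y)) :=
      Real.sinh_pos_iff.2 (mul_pos hXpos (by linarith))
    refine ⟨?_, div_pos (mul_pos hXpos (Real.exp_pos _)) (pow_pos hS 2)⟩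
    have d1 : HasDerivAt (fun u : ℝ => sinh (X * u)) (cosh (X * y) * X) y := by
      simpa [Function.comp_def] using (Real.hasDerivAt_sinh (X * y)).comp y
        ((hasDerivAt_id y).const_mul X)
    have d2 : HasDerivAt (fun u : ℝ => sinh (X * (k - u)))
        (cosh (X * (k - y)) * (X * (0 - 1))) y := by
      have := (Real.hasDerivAt_sinh (X * (k - y))).comp y
        (((hasDerivAt_const y k).sub (hasDerivAt_id y)).const_mul X)
      exact this
    have d3 := ((d1.div d2 hS.ne').const_mul (exp (-m * k) / sinh (X * k))).add_const B
    have sumid : sinh (X * y) * cosh (X * (k - y)) + cosh (X * y) * sinh (X * (k - y)) =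
        sinh (X * k) := by
      rw [← Real.sinh_add, show X * y + X * (k - y) = X * k by ring]
    have hval : exp (-m * k) / sinh (X * k) *
        ((cosh (X * y) * X * sinh (X * (k - y)) -
          sinh (X * y) * (cosh (X * (k - y)) * (X * (0 - 1)))) /
            sinh (X * (k - y)) ^ 2) =
        X * exp (-m * k) / sinh (X * (k - y)) ^ 2 := by
      rw [div_mul_div_comm, div_eq_div_iff (by positivity) (by positivity)]
      linear_combination (rexp (-m * k) * X * sinh (X * (k - y)) ^ 2) * sumid
    rw [hval] at d3
    exact d3.congr_of_eventuallyEq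
      (Filter.eventuallyEq_of_mem (Iio_mem_nhds hyk) key)
  · intro y₁ hy₁ y₂ hy₂
    have hS1 : 0 < sinh (X * (k - y₁)) :=
      Real.sinh_pos_iff.2 (mul_pos hXpos (by linarith [hy₁.2]))
    have hS2 : 0 < sinh (X * (k - y₂)) :=
      Real.sinh_pos_iff.2 (mul_pos hXpos (by linarith [hy₂.2]))
    rw [key y₁ hy₁.2, key y₂ hy₂.2]
    have hident : sinh (X * y₂) * sinh (X * (k - y₁)) -
        sinh (X * y₁) * sinh (X * (k - y₂)) = sinh (X * k) * sinh (X * (y₂ - y₁)) := by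
      rw [mul_sub X k y₁, mul_sub X k y₂, mul_sub X y₂ y₁,
        Real.sinh_sub, Real.sinh_sub, Real.sinh_sub]
      ring
    have hg : rexp (-m * k) / sinh (X * k) * (sinh (X * y₂) / sinh (X * (k - y₂))) + B -
        (rexp (-m * k) / sinh (X * k) * (sinh (X * y₁) / sinh (X * (k - y₁))) + B) =
        rexp (-m * k) / sinh (X * k) *
          ((sinh (X * y₂) * sinh (X * (k - y₁)) - sinh (X * (k - y₂)) * sinh (X * y₁)) /
            (sinh (X * (k - y₂)) * sinh (X * (k - y₁)))) := by
      rw [← div_sub_div _ _ hS2.ne' hS1.ne']; ring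
    rw [hg, show sinh (X * y₂) * sinh (X * (k - y₁)) - sinh (X * (k - y₂)) * sinh (X * y₁) =
        sinh (X * k) * sinh (X * (y₂ - y₁)) from by linear_combination hident]
    field_simp
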